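/- Let r₁, r₂, r₃ be positive real numbers. Then δ_r(r₁, r₂, r₃) ≥ π/√12, with equality if and only if r₁ = r₂ = r₃. -/

import Mathlib

open Real

/-- Inradius of the triangle formed by the centers of three mutually externally tangent
circles of radii `r₁, r₂, r₃`. -/
noncomputable def inradiusR (r₁ r₂ r₃ : ℝ) : ℝ := Real.sqrt (r₁ * r₂ * r₃ / (r₁ + r₂ + r₃))

/-- Area of that triangle (Heron's formula). -/
noncomputable def triAreaR (r₁ r₂ r₃ : ℝ) : ℝ := Real.sqrt (r₁ * r₂ * r₃ * (r₁ + r₂ + r₃))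

/-- Density of the three circles inside the triangle of their centers, in terms of radii. -/
noncomputable def deltaR (r₁ r₂ r₃ : ℝ) : ℝ :=
  ((π / 2 - arctan (r₁ / inradiusR r₁ r₂ r₃)) * r₁ ^ 2 +
      (π / 2 - arctan (r₂ / inradiusR r₁ r₂ r₃)) * r₂ ^ 2 +
      (π / 2 - arctan (r₃ / inradiusR r₁ r₂ r₃)) * r₃ ^ 2) / triAreaR r₁ r₂ r₃


open Set

/-- cot as cos/sin has derivative `-(1/sin²)`. -/
lemma hasDerivAt_cot {θ : ℝ} (hs : Real.sin θ ≠ 0) :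
    HasDerivAt (fun x => Real.cos x / Real.sin x) (-(1/(Real.sin θ)^2)) θ := by
  have h := (Real.hasDerivAt_cos θ).div (Real.hasDerivAt_sin θ) hs
  refine h.congr_deriv ?_
  field_simp
  linear_combination -(Real.sin_sq_add_cos_sq θ)

noncomputable def Fa (θ : ℝ) : ℝ :=
  θ * (Real.cos θ / Real.sin θ)^2 - (π * Real.sqrt 3 / 6) * (Real.cos θ / Real.sin θ)
    - (3 - 2 * Real.sqrt 3 * π / 3) * θ

noncomputable def Fa' (θ : ℝ) : ℝ :=
  (Real.cos θ / Real.sin θ)^2 - 2 * θ * ((Real.cos θ / Real.sin θ) / (Real.sin θ)^2)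
    + (π * Real.sqrt 3 / 6) * ((Real.sin θ)^2)⁻¹ - (3 - 2 * Real.sqrt 3 * π / 3)

lemma hasDerivAt_Fa {θ : ℝ} (hs : Real.sin θ ≠ 0) : HasDerivAt Fa (Fa' θ) θ := by
  have hcot := hasDerivAt_cot hs
  have h1 : HasDerivAt (fun x => x * (Real.cos x / Real.sin x)^2)
      (1 * (Real.cos θ / Real.sin θ)^2 +
        θ * (2 * (Real.cos θ / Real.sin θ)^1 * (-(1/(Real.sin θ)^2)))) θ :=
    (hasDerivAt_id θ).mul (hcot.pow 2)
  have h2 : HasDerivAt (fun x => (π * Real.sqrt 3 / 6) * (Real.cos x / Real.sin x))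
      ((π * Real.sqrt 3 / 6) * (-(1/(Real.sin θ)^2))) θ := hcot.const_mul _
  have h3 : HasDerivAt (fun x => (3 - 2 * Real.sqrt 3 * π / 3) * x)
      ((3 - 2 * Real.sqrt 3 * π / 3) * 1) θ := (hasDerivAt_id θ).const_mul _
  have h := (h1.sub h2).sub h3
  refine h.congr_deriv ?_
  unfold Fa'
  ring

noncomputable def Da (θ : ℝ) : ℝ :=
  2 * (θ * (1 + 2 * (Real.cos θ)^2) - (2 + π * Real.sqrt 3 / 6) * (Real.sin θ * Real.cos θ))
    / (Real.sin θ)^4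

lemma hasDerivAt_Fa' {θ : ℝ} (hs : Real.sin θ ≠ 0) : HasDerivAt Fa' (Da θ) θ := by
  have hcot := hasDerivAt_cot hs
  have hs2 : HasDerivAt (fun x => (Real.sin x)^2) (2 * (Real.sin θ)^1 * Real.cos θ) θ :=
    (Real.hasDerivAt_sin θ).pow 2
  have hs2ne : (Real.sin θ)^2 ≠ 0 := pow_ne_zero 2 hs
  have t1 : HasDerivAt (fun x => (Real.cos x / Real.sin x)^2)
      (2 * (Real.cos θ / Real.sin θ)^1 * (-(1/(Real.sin θ)^2))) θ := hcot.pow 2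
  have inner : HasDerivAt (fun x => (Real.cos x / Real.sin x) / (Real.sin x)^2)
      (((-(1/(Real.sin θ)^2)) * (Real.sin θ)^2 -
        (Real.cos θ / Real.sin θ) * (2 * (Real.sin θ)^1 * Real.cos θ)) / ((Real.sin θ)^2)^2) θ :=
    hcot.div hs2 hs2ne
  have t2 : HasDerivAt (fun x => 2 * x * ((Real.cos x / Real.sin x) / (Real.sin x)^2))
      (2 * 1 * ((Real.cos θ / Real.sin θ) / (Real.sin θ)^2) +
        2 * θ * (((-(1/(Real.sin θ)^2)) * (Real.sin θ)^2 -
          (Real.cos θ / Real.sin θ) * (2 * (Real.sin θ)^1 * Real.cos θ)) / ((Real.sin θ)^2)^2)) θ :=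
    ((hasDerivAt_id θ).const_mul (2:ℝ)).mul inner
  have t3 : HasDerivAt (fun x => (π * Real.sqrt 3 / 6) * ((Real.sin x)^2)⁻¹)
      ((π * Real.sqrt 3 / 6) * (-(2 * (Real.sin θ)^1 * Real.cos θ) / ((Real.sin θ)^2)^2)) θ :=
    (hs2.inv hs2ne).const_mul _
  have t4 : HasDerivAt (fun _ : ℝ => (3 - 2 * Real.sqrt 3 * π / 3)) 0 θ := hasDerivAt_const _ _
  have h := ((t1.sub t2).add t3).sub t4
  refine h.congr_deriv ?_
  unfold Da
  field_simp
  ring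

lemma sin_sub_mul_cos_nonneg {θ : ℝ} (h0 : 0 ≤ θ) (h1 : θ ≤ π/2) :
    θ * Real.cos θ ≤ Real.sin θ := by
  rcases eq_or_lt_of_le h0 with h|h0'
  · simp [← h]
  rcases eq_or_lt_of_le h1 with h|h1'
  · rw [h]; simp [Real.cos_pi_div_two]
  have hc : 0 < Real.cos θ := Real.cos_pos_of_mem_Ioo ⟨by linarith [Real.pi_pos], h1'⟩
  have ht := Real.lt_tan h0' h1'
  rw [Real.tan_eq_sin_div_cos] at ht
  calc θ * Real.cos θ ≤ (Real.sin θ / Real.cos θ) * Real.cos θ := by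
        apply mul_le_mul_of_nonneg_right ht.le hc.le
    _ = Real.sin θ := by field_simp

lemma cusa {θ : ℝ} (h0 : 0 ≤ θ) (h1 : θ ≤ π/2) :
    3 * (Real.sin θ * Real.cos θ) ≤ θ * (1 + 2 * (Real.cos θ)^2) := by
  set g : ℝ → ℝ := fun x => x * (1 + 2 * (Real.cos x)^2) - 3 * (Real.sin x * Real.cos x) with hg
  have hd : ∀ x : ℝ, HasDerivAt g
      (1 * (1 + 2 * (Real.cos x)^2) + x * (2 * (2 * (Real.cos x)^1 * (-Real.sin x)))
        - 3 * (Real.cos x * Real.cos x + Real.sin x * (-Real.sin x))) x := by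
    intro x
    exact ((hasDerivAt_id x).mul (((Real.hasDerivAt_cos x).pow 2).const_mul 2 |>.const_add 1)).sub
      (((Real.hasDerivAt_sin x).mul (Real.hasDerivAt_cos x)).const_mul 3)
  have hmono : MonotoneOn g (Set.Icc 0 (π/2)) := by
    apply monotoneOn_of_deriv_nonneg (convex_Icc _ _)
    · exact Continuous.continuousOn (by fun_prop)
    · intro x hx
      exact (hd x).differentiableAt.differentiableWithinAt
    · intro x hx
      rw [interior_Icc] at hx
      rw [(hd x).deriv]
      have hsc := sin_sub_mul_cos_nonneg hx.1.le hx.2.le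
      have hsn : 0 ≤ Real.sin x := Real.sin_nonneg_of_nonneg_of_le_pi hx.1.le
        (by linarith [Real.pi_pos, hx.2])
      nlinarith [Real.sin_sq_add_cos_sq x]
  have h00 : g 0 = 0 := by simp [hg]
  have := hmono (Set.mem_Icc.mpr ⟨le_refl 0, by linarith [Real.pi_pos]⟩)
    (Set.mem_Icc.mpr ⟨h0, h1⟩) h0
  rw [h00] at this
  simp only [hg] at this
  linarith

lemma sqrt3_lt : Real.sqrt 3 < 1.8 := by
  rw [show (1.8:ℝ) = Real.sqrt (1.8^2) by rw [Real.sqrt_sq]; norm_num]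
  apply Real.sqrt_lt_sqrt <;> norm_num

lemma cst_lt_one : π * Real.sqrt 3 / 6 < 1 := by
  have h1 := Real.pi_lt_d2
  have h2 := sqrt3_lt
  have h3 := Real.sqrt_nonneg 3
  have h4 := Real.pi_pos
  nlinarith

lemma Da_pos {θ : ℝ} (hθ : θ ∈ Set.Ioo 0 (π/2)) : 0 < Da θ := by
  have hs : 0 < Real.sin θ := Real.sin_pos_of_pos_of_lt_pi hθ.1 (by linarith [Real.pi_pos, hθ.2])
  have hc : 0 < Real.cos θ := Real.cos_pos_of_mem_Ioo ⟨by linarith [Real.pi_pos, hθ.1], hθ.2⟩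
  have hcu := cusa hθ.1.le hθ.2.le
  have h1 := cst_lt_one
  unfold Da
  apply div_pos _ (by positivity)
  nlinarith [mul_pos hs hc]

lemma sin_ne_of_mem {θ : ℝ} (hθ : θ ∈ Set.Ioo 0 (π/2)) : Real.sin θ ≠ 0 :=
  ne_of_gt (Real.sin_pos_of_pos_of_lt_pi hθ.1 (by linarith [Real.pi_pos, hθ.2]))

lemma pi6_mem : π/6 ∈ Set.Ioo 0 (π/2) := by
  constructor <;> [positivity; linarith [Real.pi_pos]]

lemma Fa'_strictMono : StrictMonoOn Fa' (Set.Ioo 0 (π/2)) := by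
  apply strictMonoOn_of_deriv_pos (convex_Ioo _ _)
  · intro x hx
    exact (hasDerivAt_Fa' (sin_ne_of_mem hx)).continuousAt.continuousWithinAt
  · intro x hx
    rw [interior_Ioo] at hx
    rw [(hasDerivAt_Fa' (sin_ne_of_mem hx)).deriv]
    exact Da_pos hx

lemma sq_sqrt3 : (Real.sqrt 3)^2 = 3 := Real.sq_sqrt (by norm_num)

lemma Fa'_pi6 : Fa' (π/6) = 0 := by
  unfold Fa'
  rw [Real.sin_pi_div_six, Real.cos_pi_div_six]
  have h3 := sq_sqrt3
  field_simp
  nlinarith [Real.sqrt_nonneg 3, Real.pi_pos]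

lemma Fa_min {θ : ℝ} (hθ : θ ∈ Set.Ioo 0 (π/2)) :
    Fa (π/6) ≤ Fa θ ∧ (Fa θ = Fa (π/6) ↔ θ = π/6) := by
  have hanti : StrictAntiOn Fa (Set.Ioc 0 (π/6)) := by
    apply strictAntiOn_of_deriv_neg (convex_Ioc _ _)
    · intro x hx
      have hx' : x ∈ Set.Ioo 0 (π/2) := ⟨hx.1, lt_of_le_of_lt hx.2 (by linarith [Real.pi_pos])⟩
      exact (hasDerivAt_Fa (sin_ne_of_mem hx')).continuousAt.continuousWithinAt
    · intro x hx
      rw [interior_Ioc] at hx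
      have hx' : x ∈ Set.Ioo 0 (π/2) := ⟨hx.1, by linarith [Real.pi_pos, hx.2]⟩
      rw [(hasDerivAt_Fa (sin_ne_of_mem hx')).deriv]
      calc Fa' x < Fa' (π/6) := Fa'_strictMono hx' pi6_mem hx.2
        _ = 0 := Fa'_pi6
  have hmono : StrictMonoOn Fa (Set.Ico (π/6) (π/2)) := by
    apply strictMonoOn_of_deriv_pos (convex_Ico _ _)
    · intro x hx
      have hx' : x ∈ Set.Ioo 0 (π/2) := ⟨lt_of_lt_of_le pi6_mem.1 hx.1, hx.2⟩
      exact (hasDerivAt_Fa (sin_ne_of_mem hx')).continuousAt.continuousWithinAt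
    · intro x hx
      rw [interior_Ico] at hx
      have hx' : x ∈ Set.Ioo 0 (π/2) := ⟨lt_trans pi6_mem.1 hx.1, hx.2⟩
      rw [(hasDerivAt_Fa (sin_ne_of_mem hx')).deriv]
      calc (0:ℝ) = Fa' (π/6) := Fa'_pi6.symm
        _ < Fa' x := Fa'_strictMono pi6_mem hx' hx.1
  rcases lt_trichotomy θ (π/6) with h|h|h
  · have := hanti (Set.mem_Ioc.mpr ⟨hθ.1, h.le⟩) (Set.mem_Ioc.mpr ⟨pi6_mem.1, le_refl _⟩) h
    exact ⟨this.le, ⟨fun he => absurd he (by linarith), fun he => absurd he (by linarith)⟩⟩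
  · subst h; exact ⟨le_refl _, by simp⟩
  · have := hmono (Set.mem_Ico.mpr ⟨le_refl _, pi6_mem.2⟩) (Set.mem_Ico.mpr ⟨h.le, hθ.2⟩) h
    exact ⟨this.le, ⟨fun he => absurd he (by linarith), fun he => absurd he (by linarith)⟩⟩

lemma Fa_pi6 : Fa (π/6) = -(3 - 2 * Real.sqrt 3 * π / 3) * (π/6) := by
  unfold Fa
  rw [Real.sin_pi_div_six, Real.cos_pi_div_six]
  have h3 : Real.sqrt 3 * Real.sqrt 3 = 3 := Real.mul_self_sqrt (by norm_num)
  field_simp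
  norm_num

lemma sum3 {θ₁ θ₂ θ₃ : ℝ} (h₁ : θ₁ ∈ Set.Ioo 0 (π/2)) (h₂ : θ₂ ∈ Set.Ioo 0 (π/2))
    (h₃ : θ₃ ∈ Set.Ioo 0 (π/2)) (hsum : θ₁ + θ₂ + θ₃ = π/2) :
    0 ≤ (θ₁ * (Real.cos θ₁ / Real.sin θ₁)^2 - (π * Real.sqrt 3 / 6) * (Real.cos θ₁ / Real.sin θ₁))
      + (θ₂ * (Real.cos θ₂ / Real.sin θ₂)^2 - (π * Real.sqrt 3 / 6) * (Real.cos θ₂ / Real.sin θ₂))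
      + (θ₃ * (Real.cos θ₃ / Real.sin θ₃)^2 - (π * Real.sqrt 3 / 6) * (Real.cos θ₃ / Real.sin θ₃))
    ∧ ((θ₁ * (Real.cos θ₁ / Real.sin θ₁)^2 - (π * Real.sqrt 3 / 6) * (Real.cos θ₁ / Real.sin θ₁))
      + (θ₂ * (Real.cos θ₂ / Real.sin θ₂)^2 - (π * Real.sqrt 3 / 6) * (Real.cos θ₂ / Real.sin θ₂))
      + (θ₃ * (Real.cos θ₃ / Real.sin θ₃)^2 - (π * Real.sqrt 3 / 6) * (Real.cos θ₃ / Real.sin θ₃))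
      = 0 ↔ θ₁ = π/6 ∧ θ₂ = π/6 ∧ θ₃ = π/6) := by
  obtain ⟨k1, e1⟩ := Fa_min h₁
  obtain ⟨k2, e2⟩ := Fa_min h₂
  obtain ⟨k3, e3⟩ := Fa_min h₃
  have hE : (θ₁ * (Real.cos θ₁ / Real.sin θ₁)^2 - (π * Real.sqrt 3 / 6) * (Real.cos θ₁ / Real.sin θ₁))
      + (θ₂ * (Real.cos θ₂ / Real.sin θ₂)^2 - (π * Real.sqrt 3 / 6) * (Real.cos θ₂ / Real.sin θ₂))
      + (θ₃ * (Real.cos θ₃ / Real.sin θ₃)^2 - (π * Real.sqrt 3 / 6) * (Real.cos θ₃ / Real.sin θ₃))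
      = (Fa θ₁ - Fa (π/6)) + (Fa θ₂ - Fa (π/6)) + (Fa θ₃ - Fa (π/6)) := by
    rw [Fa_pi6]
    simp only [Fa]
    linear_combination (3 - 2 * Real.sqrt 3 * π / 3) * hsum
  rw [hE]
  refine ⟨by linarith, ⟨fun h => ?_, fun ⟨a, b, c⟩ => by rw [a, b, c]; ring⟩⟩
  exact ⟨e1.mp (by linarith), e2.mp (by linarith), e3.mp (by linarith)⟩

lemma arctan_sum3 {a b c : ℝ} (ha : 0 < a) (hb : 0 < b) (hc : 0 < c)
    (h : a * b + b * c + c * a = 1) :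
    Real.arctan a + Real.arctan b + Real.arctan c = π / 2 := by
  have hab : a * b < 1 := by nlinarith
  have hx : 0 < (a + b) / (1 - a * b) := div_pos (by linarith) (by linarith)
  have hc' : c = ((a + b) / (1 - a * b))⁻¹ := by
    rw [inv_div]
    rw [eq_div_iff (by positivity)]
    linear_combination h
  rw [Real.arctan_add hab, hc', Real.arctan_inv_of_pos hx]
  ring

set_option maxHeartbeats 1000000 in
theorem min_density_radii (r₁ r₂ r₃ : ℝ) (h₁ : 0 < r₁) (h₂ : 0 < r₂) (h₃ : 0 < r₃) :
    deltaR r₁ r₂ r₃ ≥ π / Real.sqrt 12 ∧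
      (deltaR r₁ r₂ r₃ = π / Real.sqrt 12 ↔ r₁ = r₂ ∧ r₂ = r₃) := by
  have hspos : 0 < r₁ + r₂ + r₃ := by positivity
  obtain ⟨R, hRdef⟩ : ∃ R, R = inradiusR r₁ r₂ r₃ := ⟨_, rfl⟩
  have hR : 0 < R := by rw [hRdef]; exact Real.sqrt_pos.mpr (by positivity)
  have hR2 : R^2 = r₁ * r₂ * r₃ / (r₁ + r₂ + r₃) := by
    rw [hRdef]; exact Real.sq_sqrt (by positivity)
  have hR2' : R^2 * (r₁ + r₂ + r₃) = r₁ * r₂ * r₃ := by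
    rw [hR2]; field_simp
  -- the three half-angles
  obtain ⟨θ₁, hθ₁def⟩ : ∃ t, t = Real.arctan (R / r₁) := ⟨_, rfl⟩
  obtain ⟨θ₂, hθ₂def⟩ : ∃ t, t = Real.arctan (R / r₂) := ⟨_, rfl⟩
  obtain ⟨θ₃, hθ₃def⟩ : ∃ t, t = Real.arctan (R / r₃) := ⟨_, rfl⟩
  have hmem : ∀ r : ℝ, 0 < r → Real.arctan (R / r) ∈ Set.Ioo 0 (π/2) := by
    intro r hr
    refine ⟨?_, Real.arctan_lt_pi_div_two _⟩
    rw [← Real.arctan_zero]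
    exact Real.arctan_strictMono (by positivity)
  have hm₁ := hmem r₁ h₁; have hm₂ := hmem r₂ h₂; have hm₃ := hmem r₃ h₃
  have hcot : ∀ r : ℝ, 0 < r →
      Real.cos (Real.arctan (R / r)) / Real.sin (Real.arctan (R / r)) = r / R := by
    intro r hr
    have hm := hmem r hr
    have hsθ : Real.sin (Real.arctan (R / r)) ≠ 0 := sin_ne_of_mem hm
    have hcθ : Real.cos (Real.arctan (R / r)) ≠ 0 :=
      ne_of_gt (Real.cos_pos_of_mem_Ioo ⟨by linarith [Real.pi_pos, hm.1], hm.2⟩)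
    have ht : Real.tan (Real.arctan (R / r)) = R / r := Real.tan_arctan _
    rw [Real.tan_eq_sin_div_cos] at ht
    rw [div_eq_div_iff hcθ (ne_of_gt hr)] at ht
    rw [div_eq_div_iff hsθ (ne_of_gt hR)]
    linarith [ht]
  have hcot₁ := hcot r₁ h₁; have hcot₂ := hcot r₂ h₂; have hcot₃ := hcot r₃ h₃
  rw [← hθ₁def] at hcot₁ hm₁; rw [← hθ₂def] at hcot₂ hm₂; rw [← hθ₃def] at hcot₃ hm₃
  -- sum of angles is π/2
  have hsum : θ₁ + θ₂ + θ₃ = π / 2 := by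
    rw [hθ₁def, hθ₂def, hθ₃def]
    apply arctan_sum3 (by positivity) (by positivity) (by positivity)
    field_simp
    linear_combination hR2'
  -- key inequality from sum3
  obtain ⟨Epos, Eiff⟩ := sum3 hm₁ hm₂ hm₃ hsum
  rw [hcot₁, hcot₂, hcot₃] at Epos Eiff
  -- area = R * s
  have hT : triAreaR r₁ r₂ r₃ = R * (r₁ + r₂ + r₃) := by
    rw [hRdef]
    unfold triAreaR inradiusR
    rw [show r₁ * r₂ * r₃ * (r₁ + r₂ + r₃)
        = (r₁ * r₂ * r₃ / (r₁ + r₂ + r₃)) * (r₁ + r₂ + r₃)^2 by field_simp]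
    rw [Real.sqrt_mul (by positivity), Real.sqrt_sq (by positivity)]
  -- numerator in terms of θᵢ
  have hang : ∀ r : ℝ, 0 < r → π / 2 - Real.arctan (r / R) = Real.arctan (R / r) := by
    intro r hr
    rw [show R / r = (r / R)⁻¹ by rw [inv_div], Real.arctan_inv_of_pos (by positivity)]
  have hnum : deltaR r₁ r₂ r₃
      = (θ₁ * r₁^2 + θ₂ * r₂^2 + θ₃ * r₃^2) / (R * (r₁ + r₂ + r₃)) := by
    unfold deltaR
    rw [hT, ← hRdef, hang r₁ h₁, hang r₂ h₂, hang r₃ h₃, ← hθ₁def, ← hθ₂def, ← hθ₃def]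
  -- constant identity
  have hc12 : π / Real.sqrt 12 = π * Real.sqrt 3 / 6 := by
    have h12 : Real.sqrt 12 = 2 * Real.sqrt 3 := by
      rw [show (12:ℝ) = 2^2 * 3 by norm_num, Real.sqrt_mul (by positivity),
        Real.sqrt_sq (by norm_num)]
    have h3 := sq_sqrt3
    have hne : Real.sqrt 3 ≠ 0 := by positivity
    rw [h12]
    field_simp
    linear_combination (-2) * h3
  -- bridge
  have hkey : θ₁ * r₁^2 + θ₂ * r₂^2 + θ₃ * r₃^2
      - (π * Real.sqrt 3 / 6) * (R * (r₁ + r₂ + r₃))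
      = R^2 * ((θ₁ * (r₁/R)^2 - (π * Real.sqrt 3 / 6) * (r₁/R))
        + (θ₂ * (r₂/R)^2 - (π * Real.sqrt 3 / 6) * (r₂/R))
        + (θ₃ * (r₃/R)^2 - (π * Real.sqrt 3 / 6) * (r₃/R))) := by
    field_simp
    ring
  have hRs : 0 < R * (r₁ + r₂ + r₃) := by positivity
  constructor
  · rw [hnum, hc12, ge_iff_le, le_div_iff₀ hRs]
    nlinarith [mul_nonneg (sq_nonneg R) Epos]
  · rw [hnum, hc12, div_eq_iff (ne_of_gt hRs)]
    constructor
    · intro h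
      have hE0 : (θ₁ * (r₁/R)^2 - (π * Real.sqrt 3 / 6) * (r₁/R))
          + (θ₂ * (r₂/R)^2 - (π * Real.sqrt 3 / 6) * (r₂/R))
          + (θ₃ * (r₃/R)^2 - (π * Real.sqrt 3 / 6) * (r₃/R)) = 0 := by
        have hprod : R^2 * ((θ₁ * (r₁/R)^2 - (π * Real.sqrt 3 / 6) * (r₁/R))
            + (θ₂ * (r₂/R)^2 - (π * Real.sqrt 3 / 6) * (r₂/R))
            + (θ₃ * (r₃/R)^2 - (π * Real.sqrt 3 / 6) * (r₃/R))) = 0 := by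
          rw [← hkey]; linarith
        exact (mul_eq_zero.mp hprod).resolve_left (pow_ne_zero 2 (ne_of_gt hR))
      obtain ⟨e1, e2, e3⟩ := Eiff.mp hE0
      have c1 : r₁ / R = r₂ / R := by rw [← hcot₁, ← hcot₂, e1, e2]
      have c2 : r₂ / R = r₃ / R := by rw [← hcot₂, ← hcot₃, e2, e3]
      rw [div_eq_div_iff (ne_of_gt hR) (ne_of_gt hR)] at c1 c2
      exact ⟨mul_right_cancel₀ (ne_of_gt hR) c1, mul_right_cancel₀ (ne_of_gt hR) c2⟩
    · rintro ⟨e12, e23⟩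
      have hθe1 : θ₁ = θ₂ := by rw [hθ₁def, hθ₂def, e12]
      have hθe2 : θ₂ = θ₃ := by rw [hθ₂def, hθ₃def, e23]
      have hθ6 : θ₁ = π/6 ∧ θ₂ = π/6 ∧ θ₃ = π/6 := by
        refine ⟨by linarith, by linarith, by linarith⟩
      have hz : R ^ 2 * ((θ₁ * (r₁/R)^2 - (π * Real.sqrt 3 / 6) * (r₁/R))
          + (θ₂ * (r₂/R)^2 - (π * Real.sqrt 3 / 6) * (r₂/R))
          + (θ₃ * (r₃/R)^2 - (π * Real.sqrt 3 / 6) * (r₃/R))) = 0 := by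
        rw [Eiff.mpr hθ6, mul_zero]
      linarith [hkey, hz]
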